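/- If the uniform distribution on rank functions of a given oriented binary tree t is pushed forward to the rank functions of its underlying (unoriented) tree shape t', then the induced distribution on rank functions of t' is uniform; specifically, every rank function of t' has exactly 2^q preimages among rank functions of t, where q is the number of big symmetric vertices of t. -/
import Mathlib


/-- A rooted binary tree with ordered (left/right) children. -/
inductive OTree : Type
  | leaf : OTree
  | node : OTree → OTree → OTree
deriving DecidableEq

/-- Number of leaves. -/
def OTree.nLeaves : OTree → ℕ
  | .leaf => 1
  | .node l r => l.nLeaves + r.nLeaves

/-- Number of internal nodes. -/
def OTree.nInt : OTree → ℕ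
  | .leaf => 0
  | .node l r => l.nInt + r.nInt + 1

/-- `t.isInt p` : the path `p` (`true` = left) leads to an internal node of `t`. -/
def OTree.isInt : OTree → List Bool → Prop
  | .leaf, _ => False
  | .node _ _, [] => True
  | .node l _, true :: p => l.isInt p
  | .node _ r, false :: p => r.isInt p

/-- `t.isLf p` : the path `p` leads to a leaf of `t`. -/
def OTree.isLf : OTree → List Bool → Prop
  | .leaf, [] => True
  | .leaf, _ :: _ => False
  | .node _ _, [] => False
  | .node l _, true :: p => l.isLf p
  | .node _ r, false :: p => r.isLf p

/-- A ranking of the internal nodes of `t`: a bijection to `{1,…,n-1}` (here `Fin t.nInt`)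
which strictly increases along every root-to-leaf path. -/
structure Ranking (t : OTree) where
  rk : {p : List Bool // t.isInt p} → Fin t.nInt
  bij : Function.Bijective rk
  mono : ∀ p q : {p : List Bool // t.isInt p}, p.1 <+: q.1 → p.1 ≠ q.1 → rk p < rk q

/-- A ranked oriented tree. -/
def RankedOTree := Σ t : OTree, Ranking t

/-- Reorient a tree by swapping the two children at every position `p` with `σ p = true`. -/
def OTree.reorient (σ : List Bool → Bool) : OTree → OTree
  | .leaf => .leaf
  | .node l r =>
    let l' := l.reorient (fun p => σ (true :: p))
    let r' := r.reorient (fun p => σ (false :: p))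
    if σ [] then .node r' l' else .node l' r'

/-- The induced map on paths: position `p` of `t` corresponds to `pmap σ p` of `t.reorient σ`. -/
def pmap (σ : List Bool → Bool) : List Bool → List Bool
  | [] => []
  | b :: p => (xor b (σ [])) :: pmap (fun q => σ (b :: q)) p

/-- Two ranked oriented trees have the same ranked tree shape: some reorientation sends one to
the other, matching ranks. -/
def ShapeRel (x y : RankedOTree) : Prop :=
  ∃ σ : List Bool → Bool, y.1 = x.1.reorient σ ∧
    ∀ (p : {p : List Bool // x.1.isInt p}) (h : y.1.isInt (pmap σ p.1)),
      (y.2.rk ⟨pmap σ p.1, h⟩ : ℕ) = (x.2.rk p : ℕ)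

/-- The subtree rooted at the end of path `p`. -/
def OTree.subtreeAt : OTree → List Bool → OTree
  | t, [] => t
  | .leaf, _ :: _ => .leaf
  | .node l _, true :: p => l.subtreeAt p
  | .node _ r, false :: p => r.subtreeAt p

/-- A ranking-preserving symmetry of the oriented tree `t`: a reorientation fixing `t`, matching
ranks `r1` to `r2`. Rank functions of the underlying tree shape of `t` are the equivalence
classes of rank functions of `t` under these symmetries. -/
def RankShapeRel (t : OTree) (r1 r2 : Ranking t) : Prop :=
  ∃ σ : List Bool → Bool, t.reorient σ = t ∧
    ∀ (p : {p : List Bool // t.isInt p}) (h : t.isInt (pmap σ p.1)),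
      (r2.rk ⟨pmap σ p.1, h⟩ : ℕ) = (r1.rk p : ℕ)

/-- The number of big symmetric vertices of `t`: internal vertices with more than two leaves
below whose two child subtrees have isomorphic unoriented shapes. -/
noncomputable def nBigSym (t : OTree) : ℕ :=
  Nat.card {v : List Bool // t.isInt v ∧ 2 < (t.subtreeAt v).nLeaves ∧
    ∃ l r : OTree, ∃ σ : List Bool → Bool,
      t.subtreeAt v = .node l r ∧ l.reorient σ = r}

section Part1

lemma reorient_const_false : ∀ t : OTree, t.reorient (fun _ => false) = t
  | .leaf => rfl
  | .node l r => by
    simp only [OTree.reorient, if_neg Bool.false_ne_true]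
    rw [show (fun p => (false : Bool)) = (fun _ : List Bool => false) from rfl]
    exact congrArg₂ _ (reorient_const_false l) (reorient_const_false r)

lemma pmap_const_false : ∀ p : List Bool, pmap (fun _ => false) p = p
  | [] => rfl
  | b :: q => by simp [pmap, pmap_const_false q]

/-- Composition of reorientations. -/
def combo (σ τ : List Bool → Bool) : List Bool → Bool := fun p => xor (τ p) (σ (pmap τ p))

lemma combo_nil (σ τ : List Bool → Bool) : combo σ τ [] = xor (τ []) (σ []) := rfl

lemma combo_cons (σ τ : List Bool → Bool) (b : Bool) :
    (fun q => combo σ τ (b :: q)) =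
      combo (fun q => σ (xor b (τ []) :: q)) (fun q => τ (b :: q)) := by
  funext q; simp [combo, pmap]

lemma pmap_combo : ∀ (p : List Bool) (σ τ : List Bool → Bool),
    pmap (combo σ τ) p = pmap σ (pmap τ p)
  | [], _, _ => rfl
  | b :: p, σ, τ => by
    simp only [pmap, combo_cons, pmap_combo p, combo_nil]
    refine List.cons_eq_cons.mpr ⟨by cases b <;> cases τ [] <;> cases σ [] <;> rfl, rfl⟩

lemma reorient_reorient : ∀ (t : OTree) (σ τ : List Bool → Bool),
    (t.reorient τ).reorient σ = t.reorient (combo σ τ)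
  | .leaf, _, _ => rfl
  | .node l r, σ, τ => by
    cases hτ : τ [] <;> cases hσ : σ [] <;>
      simp [OTree.reorient, hτ, hσ, combo_nil, combo_cons, reorient_reorient l,
        reorient_reorient r]

lemma pmap_injective (σ : List Bool → Bool) : Function.Injective (pmap σ) := by
  intro p q h
  induction p generalizing q σ with
  | nil => cases q with
    | nil => rfl
    | cons b q => simp [pmap] at h
  | cons b p ih =>
    cases q with
    | nil => simp [pmap] at h
    | cons c q =>
      simp only [pmap, List.cons.injEq] at h
      obtain ⟨h1, h2⟩ := h
      have hbc : b = c := by cases b <;> cases c <;> simp_all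
      subst hbc
      exact congrArg _ (ih _ h2)

lemma pmap_length : ∀ (p : List Bool) (σ : List Bool → Bool), (pmap σ p).length = p.length
  | [], _ => rfl
  | b :: p, σ => by simp [pmap, pmap_length p]

/-- Inverse of a reorientation. -/
def pinv : (List Bool → Bool) → List Bool → Bool
  | σ, [] => σ []
  | σ, b :: p => pinv (fun q => σ (xor b (σ []) :: q)) p

lemma pinv_nil (σ : List Bool → Bool) : pinv σ [] = σ [] := rfl

lemma pinv_cons (σ : List Bool → Bool) (b : Bool) :
    (fun q => pinv σ (b :: q)) = pinv (fun q => σ (xor b (σ []) :: q)) := by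
  funext q; rfl

lemma pinv_spec : ∀ (p : List Bool) (σ : List Bool → Bool),
    σ (pmap (pinv σ) p) = pinv σ p
  | [], σ => rfl
  | b :: p, σ => by
    simp only [pmap, pinv_nil, pinv_cons]
    exact pinv_spec p (fun q => σ (xor b (σ []) :: q))

lemma combo_pinv_right (σ : List Bool → Bool) : combo σ (pinv σ) = fun _ => false := by
  funext p; simp [combo, pinv_spec]

lemma pmap_pinv (σ : List Bool → Bool) (p : List Bool) : pmap σ (pmap (pinv σ) p) = p := by
  rw [← pmap_combo, combo_pinv_right, pmap_const_false]

lemma pinv_pmap (σ : List Bool → Bool) (p : List Bool) : pmap (pinv σ) (pmap σ p) = p := by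
  apply pmap_injective σ; rw [pmap_pinv]

lemma pinv_of_pmap (σ : List Bool → Bool) (p : List Bool) : pinv σ (pmap σ p) = σ p := by
  conv_lhs => rw [← pinv_spec (pmap σ p) σ, pinv_pmap]

lemma combo_pinv_left (σ : List Bool → Bool) : combo (pinv σ) σ = fun _ => false := by
  funext p; simp [combo, pinv_of_pmap]

lemma reorient_pinv {t : OTree} {σ : List Bool → Bool} (h : t.reorient σ = t) :
    t.reorient (pinv σ) = t :=
  calc t.reorient (pinv σ) = (t.reorient σ).reorient (pinv σ) := by rw [h]
    _ = t.reorient (combo (pinv σ) σ) := reorient_reorient t _ σ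
    _ = t.reorient (fun _ => false) := by rw [combo_pinv_left]
    _ = t := reorient_const_false t

lemma isInt_pmap : ∀ (t : OTree) (σ : List Bool → Bool) (p : List Bool),
    t.isInt p → (t.reorient σ).isInt (pmap σ p)
  | .leaf, _, _, h => h.elim
  | .node l r, σ, [], _ => by
    cases hσ : σ [] <;> simp [OTree.reorient, hσ, pmap, OTree.isInt]
  | .node l r, σ, true :: p, h => by
    have := isInt_pmap l (fun q => σ (true :: q)) p h
    cases hσ : σ [] <;> simpa [OTree.reorient, hσ, pmap, OTree.isInt] using this
  | .node l r, σ, false :: p, h => by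
    have := isInt_pmap r (fun q => σ (false :: q)) p h
    cases hσ : σ [] <;> simpa [OTree.reorient, hσ, pmap, OTree.isInt] using this

lemma isInt_pmap_fix {t : OTree} {σ : List Bool → Bool} (h : t.reorient σ = t)
    {p : List Bool} (hp : t.isInt p) : t.isInt (pmap σ p) := by
  have := isInt_pmap t σ p hp; rwa [h] at this

lemma pmap_append : ∀ (p q : List Bool) (σ : List Bool → Bool),
    pmap σ (p ++ q) = pmap σ p ++ pmap (fun s => σ (p ++ s)) q
  | [], q, σ => rfl
  | b :: p, q, σ => by simp [pmap, pmap_append p q]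

lemma pmap_prefix {p q : List Bool} (σ : List Bool → Bool) (h : p <+: q) :
    pmap σ p <+: pmap σ q := by
  obtain ⟨s, rfl⟩ := h; rw [pmap_append]; exact List.prefix_append _ _

lemma nLeaves_reorient : ∀ (t : OTree) (σ : List Bool → Bool),
    (t.reorient σ).nLeaves = t.nLeaves
  | .leaf, _ => rfl
  | .node l r, σ => by
    cases hσ : σ [] <;>
      simp [OTree.reorient, hσ, OTree.nLeaves, nLeaves_reorient l, nLeaves_reorient r,
        Nat.add_comm]

lemma one_le_nLeaves : ∀ t : OTree, 1 ≤ t.nLeaves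
  | .leaf => le_refl _
  | .node l r => by
    have := one_le_nLeaves l; simp [OTree.nLeaves]; omega

lemma two_le_nLeaves {t : OTree} (h : t ≠ .leaf) : 2 ≤ t.nLeaves := by
  cases t with
  | leaf => exact absurd rfl h
  | node l r =>
    have h1 := one_le_nLeaves l; have h2 := one_le_nLeaves r
    simp [OTree.nLeaves]; omega

lemma Ranking.ext' {t : OTree} {a b : Ranking t} (h : a.rk = b.rk) : a = b := by
  cases a; cases b; simp only at h; subst h; rfl

end Part1

section Part2

lemma rankShapeRel_refl (t : OTree) (r : Ranking t) : RankShapeRel t r r :=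
  ⟨fun _ => false, reorient_const_false t, by
    intro p h
    exact congrArg (fun x => (r.rk x : ℕ)) (Subtype.ext (pmap_const_false p.1))⟩

lemma rankShapeRel_symm {t : OTree} {r1 r2 : Ranking t} (h : RankShapeRel t r1 r2) :
    RankShapeRel t r2 r1 := by
  obtain ⟨σ, hσ, hr⟩ := h
  refine ⟨pinv σ, reorient_pinv hσ, ?_⟩
  intro p h
  have h' : t.isInt (pmap σ (pmap (pinv σ) p.1)) := by rw [pmap_pinv]; exact p.2
  have key := hr ⟨pmap (pinv σ) p.1, h⟩ h'
  rw [show (⟨pmap σ (pmap (pinv σ) p.1), h'⟩ : {p : List Bool // t.isInt p}) = p from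
    Subtype.ext (pmap_pinv σ p.1)] at key
  exact key.symm

lemma rankShapeRel_trans {t : OTree} {r1 r2 r3 : Ranking t}
    (h12 : RankShapeRel t r1 r2) (h23 : RankShapeRel t r2 r3) :
    RankShapeRel t r1 r3 := by
  obtain ⟨σ, hσ, hr12⟩ := h12
  obtain ⟨τ, hτ, hr23⟩ := h23
  have hcombo : t.reorient (combo τ σ) = t := by
    rw [← reorient_reorient, hσ, hτ]
  refine ⟨combo τ σ, hcombo, ?_⟩
  intro p h
  have hs : t.isInt (pmap σ p.1) := isInt_pmap_fix hσ p.2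
  have ht' : t.isInt (pmap τ (pmap σ p.1)) := isInt_pmap_fix hτ hs
  have k1 := hr12 p hs
  have k2 := hr23 ⟨pmap σ p.1, hs⟩ ht'
  have : (⟨pmap (combo τ σ) p.1, h⟩ : {p : List Bool // t.isInt p})
      = ⟨pmap τ (pmap σ p.1), ht'⟩ := Subtype.ext (pmap_combo p.1 τ σ)
  rw [this]
  exact k2.trans k1

lemma rankShapeRel_equivalence (t : OTree) : Equivalence (RankShapeRel t) :=
  ⟨rankShapeRel_refl t, rankShapeRel_symm, rankShapeRel_trans⟩

/-- Split a subtype of lists according to the head. -/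
def listSplitEquiv (Q Ql Qr : List Bool → Prop) (C : Prop)
    (h0 : Q [] ↔ C) (ht : ∀ p, Q (true :: p) ↔ Ql p) (hf : ∀ p, Q (false :: p) ↔ Qr p) :
    {p : List Bool // Q p} ≃ ({_u : Unit // C} ⊕ {p // Ql p} ⊕ {p // Qr p}) where
  toFun := fun x => match x with
    | ⟨[], h⟩ => .inl ⟨⟨⟩, h0.mp h⟩
    | ⟨true :: q, h⟩ => .inr (.inl ⟨q, (ht q).mp h⟩)
    | ⟨false :: q, h⟩ => .inr (.inr ⟨q, (hf q).mp h⟩)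
  invFun := fun x => match x with
    | .inl ⟨_, hc⟩ => ⟨[], h0.mpr hc⟩
    | .inr (.inl ⟨q, h⟩) => ⟨true :: q, (ht q).mpr h⟩
    | .inr (.inr ⟨q, h⟩) => ⟨false :: q, (hf q).mpr h⟩
  left_inv := fun x => by
    rcases x with ⟨_ | ⟨_ | _, q⟩, h⟩ <;> rfl
  right_inv := fun x => by
    rcases x with ⟨_, hc⟩ | ⟨q, h⟩ | ⟨q, h⟩ <;> rfl

def ipSplitEquiv (l r : OTree) :
    {p : List Bool // (OTree.node l r).isInt p} ≃
      ({_u : Unit // True} ⊕ {p // l.isInt p} ⊕ {p // r.isInt p}) :=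
  listSplitEquiv _ _ _ _ Iff.rfl (fun _ => Iff.rfl) (fun _ => Iff.rfl)

instance ipFinite : ∀ t : OTree, Finite {p : List Bool // t.isInt p}
  | .leaf => by
    have : IsEmpty {p : List Bool // OTree.leaf.isInt p} :=
      ⟨fun x => x.2⟩
    infer_instance
  | .node l r => by
    have hl := ipFinite l
    have hr := ipFinite r
    exact Finite.of_equiv _ (ipSplitEquiv l r).symm

/-- The set of induced maps on internal paths coming from symmetries of `t`. -/
def PMaps (t : OTree) : Set ({p : List Bool // t.isInt p} → List Bool) :=
  {f | ∃ σ : List Bool → Bool, t.reorient σ = t ∧ ∀ p, f p = pmap σ p.1}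

lemma PMaps.int {t : OTree} {f} (hf : f ∈ PMaps t) (p : {p : List Bool // t.isInt p}) :
    t.isInt (f p) := by
  obtain ⟨σ, hσ, hval⟩ := hf
  rw [hval p]; exact isInt_pmap_fix hσ p.2

instance PMaps.finite (t : OTree) : Finite (PMaps t) := by
  have : Function.Injective
      (fun f : PMaps t => (fun p => (⟨f.1 p, PMaps.int f.2 p⟩ : {p : List Bool // t.isInt p}))) := by
    intro f g h
    apply Subtype.ext; funext p
    have := congrFun h p
    exact congrArg Subtype.val this
  exact Finite.of_injective _ this

end Part2

section Part3

variable {t : OTree}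

noncomputable def rkEquiv (r : Ranking t) : {p : List Bool // t.isInt p} ≃ Fin t.nInt :=
  Equiv.ofBijective r.rk r.bij

noncomputable def fiberMap (r0 : Ranking t) (x : {rk : Ranking t // RankShapeRel t r0 rk}) :
    PMaps t := by
  refine ⟨fun p => ((rkEquiv x.1).symm (r0.rk p)).1, ?_⟩
  obtain ⟨σ, hσ, hr⟩ := x.2
  refine ⟨σ, hσ, fun p => ?_⟩
  have h' : t.isInt (pmap σ p.1) := isInt_pmap_fix hσ p.2
  have key : (rkEquiv x.1).symm (r0.rk p) = ⟨pmap σ p.1, h'⟩ := by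
    apply (rkEquiv x.1).injective
    simp only [Equiv.apply_symm_apply]
    exact (Fin.val_injective (hr p h')).symm
  exact congrArg Subtype.val key

lemma fiberMap_bijective (r0 : Ranking t) : Function.Bijective (fiberMap r0) := by
  constructor
  · intro x y h
    have hv : ∀ p, ((rkEquiv x.1).symm (r0.rk p)).1 = ((rkEquiv y.1).symm (r0.rk p)).1 :=
      fun p => congrFun (congrArg Subtype.val h) p
    have hsymm : ∀ v : Fin t.nInt, (rkEquiv x.1).symm v = (rkEquiv y.1).symm v := by
      intro v
      obtain ⟨p, rfl⟩ := r0.bij.2 v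
      exact Subtype.ext (hv p)
    have heq : (rkEquiv x.1).symm = (rkEquiv y.1).symm := Equiv.ext hsymm
    have heq2 : rkEquiv x.1 = rkEquiv y.1 := by
      have := congrArg Equiv.symm heq
      simpa using this
    apply Subtype.ext
    apply Ranking.ext'
    have : ⇑(rkEquiv x.1) = ⇑(rkEquiv y.1) := congrArg _ heq2
    exact this
  · rintro ⟨f, hfmem⟩
    obtain ⟨σ, hσ, hval⟩ := hfmem
    have hint : ∀ q : {p : List Bool // t.isInt p}, t.isInt (pmap (pinv σ) q.1) :=
      fun q => isInt_pmap_fix (reorient_pinv hσ) q.2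
    set g : {p : List Bool // t.isInt p} → {p : List Bool // t.isInt p} :=
      fun q => ⟨pmap (pinv σ) q.1, hint q⟩ with hg
    have hgbij : Function.Bijective g := by
      constructor
      · intro a b hab
        exact Subtype.ext (pmap_injective _ (congrArg Subtype.val hab))
      · intro q
        refine ⟨⟨pmap σ q.1, isInt_pmap_fix hσ q.2⟩, ?_⟩
        exact Subtype.ext (by simpa using pinv_pmap σ q.1)
    set rk' : Ranking t :=
      { rk := fun q => r0.rk (g q)
        bij := r0.bij.comp hgbij
        mono := by
          intro p q hpre hne
          exact r0.mono (g p) (g q) (pmap_prefix _ hpre)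
            (fun e => hne (pmap_injective _ e)) } with hrk'
    have hrel : RankShapeRel t r0 rk' := by
      refine ⟨σ, hσ, fun p h => ?_⟩
      show (r0.rk (g ⟨pmap σ p.1, h⟩) : ℕ) = r0.rk p
      refine congrArg (fun q => (r0.rk q : ℕ)) (Subtype.ext ?_)
      show pmap (pinv σ) (pmap σ p.1) = p.1
      exact pinv_pmap σ p.1
    refine ⟨⟨rk', hrel⟩, ?_⟩
    apply Subtype.ext
    funext p
    show ((rkEquiv rk').symm (r0.rk p)).1 = f p
    rw [hval p]
    have h' : t.isInt (pmap σ p.1) := isInt_pmap_fix hσ p.2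
    have key : (rkEquiv rk').symm (r0.rk p) = ⟨pmap σ p.1, h'⟩ := by
      apply (rkEquiv rk').injective
      simp only [Equiv.apply_symm_apply]
      show r0.rk p = rk'.rk _
      show r0.rk p = r0.rk (g ⟨pmap σ p.1, h'⟩)
      refine congrArg r0.rk (Subtype.ext ?_)
      show p.1 = pmap (pinv σ) (pmap σ p.1)
      exact (pinv_pmap σ p.1).symm
    exact congrArg Subtype.val key

lemma card_fiber (t : OTree) (c : Quotient (Relation.EqvGen.setoid (RankShapeRel t))) :
    Nat.card {rk : Ranking t //
        Quotient.mk (Relation.EqvGen.setoid (RankShapeRel t)) rk = c}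
      = Nat.card (PMaps t) := by
  obtain ⟨r0, rfl⟩ := Quotient.exists_rep c
  have hiff : ∀ rk : Ranking t,
      (Quotient.mk (Relation.EqvGen.setoid (RankShapeRel t)) rk
        = Quotient.mk (Relation.EqvGen.setoid (RankShapeRel t)) r0)
      ↔ RankShapeRel t r0 rk := by
    intro rk
    rw [Quotient.eq]
    constructor
    · intro h
      exact rankShapeRel_symm (((rankShapeRel_equivalence t).eqvGen_iff).mp h)
    · intro h
      exact Relation.EqvGen.rel _ _ (rankShapeRel_symm h)
  have e1 : {rk : Ranking t //
        Quotient.mk (Relation.EqvGen.setoid (RankShapeRel t)) rk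
          = Quotient.mk (Relation.EqvGen.setoid (RankShapeRel t)) r0}
      ≃ {rk : Ranking t // RankShapeRel t r0 rk} :=
    Equiv.subtypeEquivRight hiff
  exact Nat.card_congr (e1.trans (Equiv.ofBijective _ (fiberMap_bijective r0)))

end Part3

section Part4

open scoped Classical

def BigCond (t : OTree) (v : List Bool) : Prop :=
  t.isInt v ∧ 2 < (t.subtreeAt v).nLeaves ∧
    ∃ l r : OTree, ∃ σ : List Bool → Bool, t.subtreeAt v = .node l r ∧ l.reorient σ = r

lemma nBigSym_eq (t : OTree) : nBigSym t = Nat.card {v : List Bool // BigCond t v} := rfl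

instance bigCondFinite (t : OTree) : Finite {v : List Bool // BigCond t v} :=
  Finite.of_injective (fun x => (⟨x.1, x.2.1⟩ : {p : List Bool // t.isInt p}))
    (fun a b h => by apply Subtype.ext; exact congrArg (fun y : {p : List Bool // t.isInt p} => y.1) h)

lemma bigCond_leaf (v : List Bool) : ¬ BigCond .leaf v := fun h => h.1

lemma nBigSym_leaf : nBigSym .leaf = 0 := by
  rw [nBigSym_eq]
  haveI : IsEmpty {v : List Bool // BigCond .leaf v} := ⟨fun x => bigCond_leaf x.1 x.2⟩
  exact Nat.card_of_isEmpty

lemma bigCond_cons_true (l r : OTree) (p : List Bool) :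
    BigCond (.node l r) (true :: p) ↔ BigCond l p := Iff.rfl

lemma bigCond_cons_false (l r : OTree) (p : List Bool) :
    BigCond (.node l r) (false :: p) ↔ BigCond r p := Iff.rfl

lemma bigCond_nil (l r : OTree) :
    BigCond (.node l r) [] ↔ (2 < l.nLeaves + r.nLeaves ∧ ∃ σ, l.reorient σ = r) := by
  constructor
  · rintro ⟨-, h2, l', r', σ, heq, hre⟩
    obtain ⟨rfl, rfl⟩ : l = l' ∧ r = r' := by
      injection heq with h1 h2; exact ⟨h1, h2⟩
    exact ⟨h2, σ, hre⟩
  · rintro ⟨h2, σ, hre⟩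
    exact ⟨trivial, h2, l, r, σ, rfl, hre⟩

lemma card_unit_subtype (C : Prop) [Decidable C] :
    Nat.card {_u : Unit // C} = if C then 1 else 0 := by
  split
  · rename_i h
    haveI : Unique {_u : Unit // C} := ⟨⟨⟨(), h⟩⟩, fun x => Subtype.ext rfl⟩
    exact Nat.card_unique
  · rename_i h
    haveI : IsEmpty {_u : Unit // C} := ⟨fun x => h x.2⟩
    exact Nat.card_of_isEmpty

lemma nBigSym_node (l r : OTree) :
    nBigSym (.node l r) =
      (if (2 < l.nLeaves + r.nLeaves ∧ ∃ σ, l.reorient σ = r) then 1 else 0)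
        + nBigSym l + nBigSym r := by
  classical
  rw [nBigSym_eq, nBigSym_eq, nBigSym_eq]
  rw [Nat.card_congr (listSplitEquiv (BigCond (.node l r)) (BigCond l) (BigCond r)
    (2 < l.nLeaves + r.nLeaves ∧ ∃ σ, l.reorient σ = r)
    (bigCond_nil l r) (bigCond_cons_true l r) (bigCond_cons_false l r))]
  rw [Nat.card_sum, Nat.card_sum, card_unit_subtype]
  omega

end Part4

section Part5a

lemma reorient_node_false {l r : OTree} {σ : List Bool → Bool} (h0 : σ [] = false) :
    (OTree.node l r).reorient σ =
      OTree.node (l.reorient fun q => σ (true :: q)) (r.reorient fun q => σ (false :: q)) := by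
  simp [OTree.reorient, h0]

lemma reorient_node_true {l r : OTree} {σ : List Bool → Bool} (h0 : σ [] = true) :
    (OTree.node l r).reorient σ =
      OTree.node (r.reorient fun q => σ (false :: q)) (l.reorient fun q => σ (true :: q)) := by
  simp [OTree.reorient, h0]

lemma mem_pmaps_id (t : OTree) : (fun p : {p : List Bool // t.isInt p} => p.1) ∈ PMaps t :=
  ⟨fun _ => false, reorient_const_false t, fun p => (pmap_const_false p.1).symm⟩

/-- Induced maps coming from symmetries that do not swap at the root. -/
def QSet (l r : OTree) : Set ({p : List Bool // (OTree.node l r).isInt p} → List Bool) :=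
  {f | ∃ σ : List Bool → Bool, (OTree.node l r).reorient σ = OTree.node l r ∧ σ [] = false ∧
    ∀ p, f p = pmap σ p.1}

lemma pmap_cons (σ : List Bool → Bool) (b : Bool) (p : List Bool) :
    pmap σ (b :: p) = xor b (σ []) :: pmap (fun q => σ (b :: q)) p := rfl

/-- glue two reorientations, with a given root bit -/
def glue (b : Bool) (σl σr : List Bool → Bool) : List Bool → Bool
  | [] => b
  | true :: q => σl q
  | false :: q => σr q

lemma glue_true (b : Bool) (σl σr : List Bool → Bool) :
    (fun q => glue b σl σr (true :: q)) = σl := rfl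

lemma glue_false (b : Bool) (σl σr : List Bool → Bool) :
    (fun q => glue b σl σr (false :: q)) = σr := rfl

def qToFun {l r : OTree} (f : QSet l r) : (PMaps l × PMaps r) := by
  refine (⟨fun p => (f.1 ⟨true :: p.1, p.2⟩).tail, ?_⟩,
          ⟨fun p => (f.1 ⟨false :: p.1, p.2⟩).tail, ?_⟩)
  · obtain ⟨σ, hσ, h0, hval⟩ := f.2
    have hl : l.reorient (fun q => σ (true :: q)) = l := by
      rw [reorient_node_false h0] at hσ
      injection hσ
    refine ⟨fun q => σ (true :: q), hl, fun p => ?_⟩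
    show (f.1 ⟨true :: p.1, p.2⟩).tail = pmap (fun q => σ (true :: q)) p.1
    rw [hval ⟨true :: p.1, p.2⟩, pmap_cons, h0]
    rfl
  · obtain ⟨σ, hσ, h0, hval⟩ := f.2
    have hr : r.reorient (fun q => σ (false :: q)) = r := by
      rw [reorient_node_false h0] at hσ
      injection hσ
    refine ⟨fun q => σ (false :: q), hr, fun p => ?_⟩
    show (f.1 ⟨false :: p.1, p.2⟩).tail = pmap (fun q => σ (false :: q)) p.1
    rw [hval ⟨false :: p.1, p.2⟩, pmap_cons, h0]
    rfl

def qInvRaw {l r : OTree} (g : {p : List Bool // l.isInt p} → List Bool)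
    (h : {p : List Bool // r.isInt p} → List Bool) :
    {p : List Bool // (OTree.node l r).isInt p} → List Bool := fun p =>
  match p with
  | ⟨[], _⟩ => []
  | ⟨true :: q, hq⟩ => true :: g ⟨q, hq⟩
  | ⟨false :: q, hq⟩ => false :: h ⟨q, hq⟩

def qInvFun {l r : OTree} (x : PMaps l × PMaps r) : QSet l r := by
  refine ⟨qInvRaw x.1.1 x.2.1, ?_⟩
  obtain ⟨σl, hσl, hvall⟩ := x.1.2
  obtain ⟨σr, hσr, hvalr⟩ := x.2.2
  refine ⟨glue false σl σr, ?_, rfl, ?_⟩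
  · rw [reorient_node_false rfl, glue_true, glue_false, hσl, hσr]
  · rintro ⟨(_ | ⟨(_|_), q⟩), hq⟩
    · rfl
    · show false :: x.2.1 ⟨q, hq⟩ = pmap (glue false σl σr) (false :: q)
      rw [pmap_cons, glue_false]
      show false :: x.2.1 ⟨q, hq⟩ = xor false false :: pmap σr q
      rw [hvalr ⟨q, hq⟩]
      rfl
    · show true :: x.1.1 ⟨q, hq⟩ = pmap (glue false σl σr) (true :: q)
      rw [pmap_cons, glue_true]
      show true :: x.1.1 ⟨q, hq⟩ = xor true false :: pmap σl q
      rw [hvall ⟨q, hq⟩]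
      rfl

def qEquiv (l r : OTree) : QSet l r ≃ (PMaps l × PMaps r) where
  toFun := qToFun
  invFun := qInvFun
  left_inv := by
    rintro ⟨f, hf⟩
    obtain ⟨σ, hσ, h0, hval⟩ := hf
    apply Subtype.ext
    funext p
    rcases p with ⟨(_ | ⟨(_|_), q⟩), hq⟩
    · show ([] : List Bool) = f ⟨[], hq⟩
      rw [hval ⟨[], hq⟩]
      rfl
    · show false :: (f ⟨false :: q, hq⟩).tail = f ⟨false :: q, hq⟩
      rw [hval ⟨false :: q, hq⟩, pmap_cons, h0]
      rfl
    · show true :: (f ⟨true :: q, hq⟩).tail = f ⟨true :: q, hq⟩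
      rw [hval ⟨true :: q, hq⟩, pmap_cons, h0]
      rfl
  right_inv := by
    rintro ⟨⟨g, hg⟩, ⟨h, hh⟩⟩
    refine Prod.ext (Subtype.ext ?_) (Subtype.ext ?_) <;> funext p <;> rfl

lemma card_qset (l r : OTree) :
    Nat.card (QSet l r) = Nat.card (PMaps l) * Nat.card (PMaps r) := by
  rw [Nat.card_congr (qEquiv l r), Nat.card_prod]

end Part5a

section Part5b

lemma eq_leaf_of_nLeaves_le_one {t : OTree} (h : t.nLeaves ≤ 1) : t = .leaf := by
  cases t with
  | leaf => rfl
  | node l r =>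
    exfalso
    have h1 := one_le_nLeaves l; have h2 := one_le_nLeaves r
    simp [OTree.nLeaves] at h; omega

lemma isInt_nil_of_ne_leaf {t : OTree} (h : t ≠ .leaf) : t.isInt [] := by
  cases t with
  | leaf => exact absurd rfl h
  | node l r => trivial

lemma pmaps_eq_qset {l r : OTree} (hsym : ¬∃ τ, l.reorient τ = r) :
    PMaps (OTree.node l r) = QSet l r := by
  ext f
  constructor
  · rintro ⟨σ, hσ, hval⟩
    cases h0 : σ [] with
    | false => exact ⟨σ, hσ, h0, hval⟩
    | true =>
      exfalso
      rw [reorient_node_true h0] at hσ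
      injection hσ with h1 h2
      exact hsym ⟨fun q => σ (true :: q), h2⟩
  · rintro ⟨σ, hσ, h0, hval⟩
    exact ⟨σ, hσ, hval⟩

lemma card_pmaps_node_leaf_leaf : Nat.card (PMaps (OTree.node .leaf .leaf)) = 1 := by
  rw [Nat.card_eq_one_iff_unique]
  constructor
  · constructor
    rintro ⟨f, hf⟩ ⟨g, hg⟩
    apply Subtype.ext
    funext p
    obtain ⟨σf, hσf, hvf⟩ := hf
    obtain ⟨σg, hσg, hvg⟩ := hg
    have hp : p.1 = [] := by
      rcases p with ⟨(_ | ⟨(_|_), q⟩), hq⟩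
      · rfl
      · exact hq.elim
      · exact hq.elim
    show f p = g p
    rw [hvf p, hvg p, hp]
    rfl
  · exact ⟨⟨_, mem_pmaps_id _⟩⟩

lemma reorient_pinv' {t s : OTree} {σ : List Bool → Bool} (h : t.reorient σ = s) :
    s.reorient (pinv σ) = t := by
  rw [← h, reorient_reorient, combo_pinv_left, reorient_const_false]

lemma glue_nil (b : Bool) (σl σr : List Bool → Bool) : glue b σl σr [] = b := rfl

lemma card_pmaps_node_sym {l r : OTree} (τ0 : List Bool → Bool) (hτ0 : l.reorient τ0 = r)
    (hl : l ≠ .leaf) :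
    Nat.card (PMaps (OTree.node l r)) = 2 * Nat.card (QSet l r) := by
  classical
  have hr : r ≠ .leaf := by
    intro h
    apply hl
    apply eq_leaf_of_nLeaves_le_one
    have h2 := nLeaves_reorient l τ0
    rw [hτ0, h] at h2
    simp [OTree.nLeaves] at h2
    omega
  have hint1 : (OTree.node l r).isInt [true] := isInt_nil_of_ne_leaf hl
  have hint2 : (OTree.node l r).isInt [false] := isInt_nil_of_ne_leaf hr
  set σ0 : List Bool → Bool := glue true τ0 (pinv τ0) with hσ0def
  have hσ0 : (OTree.node l r).reorient σ0 = OTree.node l r := by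
    rw [reorient_node_true rfl, glue_true, glue_false, hτ0, reorient_pinv' hτ0]
  have hswap : ∀ p : List Bool, pmap σ0 (pmap σ0 p) = p := by
    rintro (_ | ⟨(_|_), q⟩)
    · rfl
    · show pmap σ0 (pmap σ0 (false :: q)) = false :: q
      simp only [pmap_cons, show σ0 [] = true from rfl,
        show (fun q => σ0 (false :: q)) = pinv τ0 from rfl,
        show (fun q => σ0 (true :: q)) = τ0 from rfl,
        show (xor false true) = true from rfl, show (xor true true) = false from rfl,
        pmap_pinv]
    · show pmap σ0 (pmap σ0 (true :: q)) = true :: q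
      simp only [pmap_cons, show σ0 [] = true from rfl,
        show (fun q => σ0 (true :: q)) = τ0 from rfl,
        show (fun q => σ0 (false :: q)) = pinv τ0 from rfl,
        show (xor true true) = false from rfl, show (xor false true) = true from rfl,
        pinv_pmap]
  have hbit : ∀ (f : PMaps (OTree.node l r)) (σ : List Bool → Bool),
      (∀ p, f.1 p = pmap σ p.1) → f.1 ⟨[true], hint1⟩ = [!σ []] := by
    intro f σ hval
    rw [hval ⟨[true], hint1⟩, pmap_cons]
    simp [show pmap (fun q => σ (true :: q)) [] = [] from rfl]
  have hbit2 : ∀ (f : PMaps (OTree.node l r)) (σ : List Bool → Bool),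
      (∀ p, f.1 p = pmap σ p.1) → f.1 ⟨[false], hint2⟩ = [σ []] := by
    intro f σ hval
    rw [hval ⟨[false], hint2⟩, pmap_cons]
    simp [show pmap (fun q => σ (false :: q)) [] = [] from rfl]
  set pT : PMaps (OTree.node l r) → Prop := fun f => f.1 ⟨[true], hint1⟩ = [true] with hpT
  -- composition with σ0
  have cmem : ∀ f : PMaps (OTree.node l r),
      (fun p : {p : List Bool // (OTree.node l r).isInt p} =>
        f.1 ⟨pmap σ0 p.1, isInt_pmap_fix hσ0 p.2⟩) ∈ PMaps (OTree.node l r) := by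
    rintro ⟨f, σ, hσ, hval⟩
    refine ⟨combo σ σ0, ?_, fun p => ?_⟩
    · rw [← reorient_reorient, hσ0, hσ]
    · show f ⟨pmap σ0 p.1, _⟩ = pmap (combo σ σ0) p.1
      rw [hval ⟨pmap σ0 p.1, isInt_pmap_fix hσ0 p.2⟩, pmap_combo]
  have cbit : ∀ f : PMaps (OTree.node l r),
      (fun p : {p : List Bool // (OTree.node l r).isInt p} =>
        f.1 ⟨pmap σ0 p.1, isInt_pmap_fix hσ0 p.2⟩) ⟨[true], hint1⟩ = f.1 ⟨[false], hint2⟩ := by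
    intro f
    show f.1 ⟨pmap σ0 [true], _⟩ = f.1 ⟨[false], hint2⟩
    refine congrArg f.1 (Subtype.ext ?_)
    show pmap σ0 [true] = [false]
    rfl
  have equiv2 : {f : PMaps (OTree.node l r) // ¬ pT f} ≃ {f : PMaps (OTree.node l r) // pT f} := by
    refine
      { toFun := fun x => ⟨⟨_, cmem x.1⟩, ?_⟩
        invFun := fun y => ⟨⟨_, cmem y.1⟩, ?_⟩
        left_inv := fun x => ?_
        right_inv := fun y => ?_ }
    · obtain ⟨⟨f, hf⟩, hnb⟩ := x
      obtain ⟨σ, hσ, hval⟩ := hf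
      have hb : f ⟨[true], hint1⟩ = [!σ []] := hbit ⟨f, ⟨σ, hσ, hval⟩⟩ σ hval
      have h0 : σ [] = true := by
        by_contra h
        apply hnb
        show f ⟨[true], hint1⟩ = [true]
        rw [hb]
        simp at h
        rw [h]
        rfl
      have hc : (fun p : {p : List Bool // (OTree.node l r).isInt p} =>
          f ⟨pmap σ0 p.1, isInt_pmap_fix hσ0 p.2⟩) ⟨[true], hint1⟩
          = f ⟨[false], hint2⟩ := cbit ⟨f, ⟨σ, hσ, hval⟩⟩
      have hb2 : f ⟨[false], hint2⟩ = [σ []] := hbit2 ⟨f, ⟨σ, hσ, hval⟩⟩ σ hval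
      show (fun p : {p : List Bool // (OTree.node l r).isInt p} =>
        f ⟨pmap σ0 p.1, isInt_pmap_fix hσ0 p.2⟩) ⟨[true], hint1⟩ = [true]
      rw [hc, hb2, h0]
    · obtain ⟨⟨f, hf⟩, hb'⟩ := y
      obtain ⟨σ, hσ, hval⟩ := hf
      have hb : f ⟨[true], hint1⟩ = [!σ []] := hbit ⟨f, ⟨σ, hσ, hval⟩⟩ σ hval
      have h0 : σ [] = false := by
        have h1 : f ⟨[true], hint1⟩ = [true] := hb'
        rw [hb] at h1
        simpa using h1
      intro hcon
      have hc : (fun p : {p : List Bool // (OTree.node l r).isInt p} =>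
          f ⟨pmap σ0 p.1, isInt_pmap_fix hσ0 p.2⟩) ⟨[true], hint1⟩
          = f ⟨[false], hint2⟩ := cbit ⟨f, ⟨σ, hσ, hval⟩⟩
      have hb2 : f ⟨[false], hint2⟩ = [σ []] := hbit2 ⟨f, ⟨σ, hσ, hval⟩⟩ σ hval
      have h2 : (fun p : {p : List Bool // (OTree.node l r).isInt p} =>
        f ⟨pmap σ0 p.1, isInt_pmap_fix hσ0 p.2⟩) ⟨[true], hint1⟩ = [true] := hcon
      rw [hc, hb2, h0] at h2
      simp at h2
    · refine Subtype.ext (Subtype.ext ?_)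
      funext p
      show x.1.1 ⟨pmap σ0 (pmap σ0 p.1), _⟩ = x.1.1 p
      exact congrArg x.1.1 (Subtype.ext (hswap p.1))
    · refine Subtype.ext (Subtype.ext ?_)
      funext p
      show y.1.1 ⟨pmap σ0 (pmap σ0 p.1), _⟩ = y.1.1 p
      exact congrArg y.1.1 (Subtype.ext (hswap p.1))
  have equiv1 : {f : PMaps (OTree.node l r) // pT f} ≃ QSet l r := by
    refine
      { toFun := fun x => ⟨x.1.1, ?_⟩
        invFun := fun f => ⟨⟨f.1, ?_⟩, ?_⟩
        left_inv := fun x => Subtype.ext (Subtype.ext rfl)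
        right_inv := fun f => Subtype.ext rfl }
    · obtain ⟨⟨f, hf⟩, hb'⟩ := x
      obtain ⟨σ, hσ, hval⟩ := hf
      have hb : f ⟨[true], hint1⟩ = [!σ []] := hbit ⟨f, ⟨σ, hσ, hval⟩⟩ σ hval
      have h0 : σ [] = false := by
        have h1 : f ⟨[true], hint1⟩ = [true] := hb'
        rw [hb] at h1
        simpa using h1
      exact ⟨σ, hσ, h0, hval⟩
    · obtain ⟨σ, hσ, h0, hval⟩ := f.2
      exact ⟨σ, hσ, hval⟩
    · obtain ⟨σ, hσ, h0, hval⟩ := f.2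
      show f.1 ⟨[true], hint1⟩ = [true]
      rw [hval ⟨[true], hint1⟩, pmap_cons, h0]
      rfl
  calc Nat.card (PMaps (OTree.node l r))
      = Nat.card ({f : PMaps (OTree.node l r) // pT f} ⊕ {f : PMaps (OTree.node l r) // ¬ pT f}) :=
        (Nat.card_congr (Equiv.sumCompl pT)).symm
    _ = Nat.card {f : PMaps (OTree.node l r) // pT f}
        + Nat.card {f : PMaps (OTree.node l r) // ¬ pT f} := Nat.card_sum
    _ = 2 * Nat.card (QSet l r) := by
        rw [Nat.card_congr equiv2, Nat.card_congr equiv1]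
        omega

lemma card_pmaps : ∀ t : OTree, Nat.card (PMaps t) = 2 ^ nBigSym t := by
  intro t
  induction t with
  | leaf =>
    rw [nBigSym_leaf, pow_zero, Nat.card_eq_one_iff_unique]
    constructor
    · constructor
      rintro ⟨f, hf⟩ ⟨g, hg⟩
      apply Subtype.ext
      funext p
      exact p.2.elim
    · exact ⟨⟨_, mem_pmaps_id _⟩⟩
  | node l r ihl ihr =>
    classical
    by_cases hsym : ∃ τ, l.reorient τ = r
    · obtain ⟨τ0, hτ0⟩ := hsym
      by_cases hleaf : l = .leaf
      · subst hleaf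
        have hrleaf : r = .leaf := by rw [← hτ0]; rfl
        subst hrleaf
        rw [card_pmaps_node_leaf_leaf, nBigSym_node, nBigSym_leaf, if_neg]
        · rfl
        · rintro ⟨h2, -⟩
          simp [OTree.nLeaves] at h2
      · rw [card_pmaps_node_sym τ0 hτ0 hleaf, card_qset, ihl, ihr, nBigSym_node, if_pos]
        · rw [pow_add, pow_add, pow_one]
          ring
        · refine ⟨?_, τ0, hτ0⟩
          have := two_le_nLeaves hleaf
          have := one_le_nLeaves r
          omega
    · have hset : PMaps (OTree.node l r) = QSet l r := pmaps_eq_qset hsym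
      rw [hset, card_qset, ihl, ihr, nBigSym_node, if_neg, pow_add]
      · ring
      · rintro ⟨-, τ, hτ⟩
        exact hsym ⟨τ, hτ⟩

end Part5b

/-- pushing the uniform distribution on rank functions of an oriented tree `t`
forward to rank functions of its unoriented shape gives the uniform distribution: every rank
function of the shape (equivalence class of rank functions of `t`) has exactly 2^q preimages,
where q is the number of big symmetric vertices of `t`. -/
theorem stmt14 (t : OTree) (c : Quotient (Relation.EqvGen.setoid (RankShapeRel t))) :
    Nat.card {rk : Ranking t //
        Quotient.mk (Relation.EqvGen.setoid (RankShapeRel t)) rk = c}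
      = 2 ^ nBigSym t := by
  rw [card_fiber, card_pmaps]
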